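/- arXiv:1709.06697 — 5 statements merged into one kernel-verified Lean document; each statement's English description precedes it below -/
import Mathlib

section
/- Let Ω/k be a finite Galois extension of fields whose Galois group is abelian, and let A and B be intermediate fields of Ω/k such that A·B = Ω and A ∩ B = k. Let K be any intermediate field of Ω/k and set E := (K·B) ∩ A. Then [K:k] = [E:k]·[(K ∩ B):k]. -/
private theorem card_sup_mul_card_inf' {G : Type*} [Group G] [Finite G] (H N : Subgroup G)
    [N.Normal] :
    Nat.card (H ⊔ N : Subgroup G) * Nat.card (H ⊓ N : Subgroup G) =
      Nat.card H * Nat.card N := by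
  have hsi : (H ⊔ N).index ≠ 0 := Subgroup.index_ne_zero_of_finite
  have hiI : (H ⊓ N).index ≠ 0 := Subgroup.index_ne_zero_of_finite
  have a : Nat.card N * N.index = Nat.card G := Subgroup.card_mul_index N
  have b : Nat.card (H ⊔ N : Subgroup G) * (H ⊔ N).index = Nat.card G :=
    Subgroup.card_mul_index _
  have c : N.relIndex (H ⊔ N) * (H ⊔ N).index = N.index :=
    Subgroup.relIndex_mul_index le_sup_right
  have d : N.relIndex (H ⊔ N) = N.relIndex H := Subgroup.relIndex_sup_right H N
  have e : (H ⊓ N).relIndex H = N.relIndex H := by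
    rw [inf_comm]; exact Subgroup.inf_relIndex_right N H
  have f : (H ⊓ N).relIndex H * H.index = (H ⊓ N).index :=
    Subgroup.relIndex_mul_index inf_le_left
  have g : Nat.card H * H.index = Nat.card G := Subgroup.card_mul_index H
  have gI : Nat.card (H ⊓ N : Subgroup G) * (H ⊓ N).index = Nat.card G :=
    Subgroup.card_mul_index _
  rw [d] at c
  rw [e] at f
  apply Nat.eq_of_mul_eq_mul_right (Nat.pos_of_ne_zero
    (Nat.mul_ne_zero hsi hiI) : 0 < (H ⊔ N).index * (H ⊓ N).index)
  calc Nat.card (H ⊔ N : Subgroup G) * Nat.card (H ⊓ N : Subgroup G)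
        * ((H ⊔ N).index * (H ⊓ N).index)
      = (Nat.card (H ⊔ N : Subgroup G) * (H ⊔ N).index)
        * (Nat.card (H ⊓ N : Subgroup G) * (H ⊓ N).index) := by ring
    _ = Nat.card G * Nat.card G := by rw [b, gI]
    _ = (Nat.card H * H.index) * (Nat.card N * N.index) := by rw [g, a]
    _ = (Nat.card H * Nat.card N) * (H.index * N.index) := by ring
    _ = (Nat.card H * Nat.card N) * (H.index * (N.relIndex H * (H ⊔ N).index)) := by rw [c]
    _ = (Nat.card H * Nat.card N) * ((H ⊔ N).index * (N.relIndex H * H.index)) := by ring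
    _ = Nat.card H * Nat.card N * ((H ⊔ N).index * (H ⊓ N).index) := by rw [f]

private theorem index_identity' {G : Type*} [Group G] [Finite G]
    (hn : ∀ H : Subgroup G, H.Normal)
    (HA HB HK : Subgroup G) (h1 : HA ⊔ HB = ⊤) (h2 : HA ⊓ HB = ⊥) :
    HK.index = ((HK ⊓ HB) ⊔ HA).index * (HK ⊔ HB).index := by
  haveI := hn HA; haveI := hn HB
  have hEinf : (HK ⊓ HB) ⊓ HA = ⊥ := by
    rw [eq_bot_iff, ← h2]
    exact le_inf inf_le_right (inf_le_left.trans inf_le_right)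
  have nG : Nat.card G ≠ 0 := Nat.card_pos.ne'
  have cK0 : Nat.card HK ≠ 0 := Nat.card_pos.ne'
  -- card E * 1 = card (HK ⊓ HB) * card HA
  have hE := card_sup_mul_card_inf' (HK ⊓ HB) HA
  rw [hEinf, Subgroup.card_bot, mul_one] at hE
  have hS := card_sup_mul_card_inf' HK HB
  have hG := card_sup_mul_card_inf' HA HB
  rw [h1, h2, Subgroup.card_bot, Subgroup.card_top, mul_one] at hG
  -- card E * card S = card HK * card G
  have cI0 : Nat.card (HK ⊓ HB : Subgroup G) ≠ 0 := Nat.card_pos.ne'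
  have key : Nat.card ((HK ⊓ HB) ⊔ HA : Subgroup G) * Nat.card (HK ⊔ HB : Subgroup G)
      = Nat.card HK * Nat.card G := by
    apply Nat.eq_of_mul_eq_mul_right (Nat.pos_of_ne_zero cI0)
    calc Nat.card ((HK ⊓ HB) ⊔ HA : Subgroup G) * Nat.card (HK ⊔ HB : Subgroup G)
          * Nat.card (HK ⊓ HB : Subgroup G)
        = Nat.card ((HK ⊓ HB) ⊔ HA : Subgroup G)
          * (Nat.card (HK ⊔ HB : Subgroup G) * Nat.card (HK ⊓ HB : Subgroup G)) := by ring
      _ = (Nat.card (HK ⊓ HB : Subgroup G) * Nat.card HA)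
          * (Nat.card HK * Nat.card HB) := by rw [hE, hS]
      _ = Nat.card HK * (Nat.card HA * Nat.card HB)
          * Nat.card (HK ⊓ HB : Subgroup G) := by ring
      _ = Nat.card HK * Nat.card G * Nat.card (HK ⊓ HB : Subgroup G) := by rw [hG]
  -- now conclude about indices
  have bE : Nat.card ((HK ⊓ HB) ⊔ HA : Subgroup G) * ((HK ⊓ HB) ⊔ HA).index = Nat.card G :=
    Subgroup.card_mul_index _
  have bS : Nat.card (HK ⊔ HB : Subgroup G) * (HK ⊔ HB).index = Nat.card G :=
    Subgroup.card_mul_index _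
  have bK : Nat.card HK * HK.index = Nat.card G := Subgroup.card_mul_index HK
  apply Nat.eq_of_mul_eq_mul_right (Nat.pos_of_ne_zero (Nat.mul_ne_zero cK0 nG)
    : 0 < Nat.card HK * Nat.card G)
  calc HK.index * (Nat.card HK * Nat.card G)
      = (Nat.card HK * HK.index) * Nat.card G := by ring
    _ = Nat.card G * Nat.card G := by rw [bK]
    _ = (Nat.card ((HK ⊓ HB) ⊔ HA : Subgroup G) * ((HK ⊓ HB) ⊔ HA).index)
        * (Nat.card (HK ⊔ HB : Subgroup G) * (HK ⊔ HB).index) := by rw [bE, bS]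
    _ = (((HK ⊓ HB) ⊔ HA).index * (HK ⊔ HB).index)
        * (Nat.card ((HK ⊓ HB) ⊔ HA : Subgroup G) * Nat.card (HK ⊔ HB : Subgroup G)) := by ring
    _ = ((HK ⊓ HB) ⊔ HA).index * (HK ⊔ HB).index * (Nat.card HK * Nat.card G) := by rw [key]


/-- Let `Ω/k` be a finite Galois extension with abelian Galois group,
and `A`, `B` intermediate fields with `A·B = Ω` and `A ∩ B = k`. For any intermediate
field `K`, setting `E := (K·B) ∩ A`, we have `[K:k] = [E:k]·[(K ∩ B):k]`. -/
theorem degree_eq_degree_mul_degree_of_galois_correspondence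
    (k Ω : Type*) [Field k] [Field Ω] [Algebra k Ω]
    [FiniteDimensional k Ω] [IsGalois k Ω]
    (habel : ∀ σ τ : Ω ≃ₐ[k] Ω, σ * τ = τ * σ)
    (A B : IntermediateField k Ω) (hsup : A ⊔ B = ⊤) (hinf : A ⊓ B = ⊥)
    (K : IntermediateField k Ω) :
    Module.finrank k K =
      Module.finrank k ((K ⊔ B) ⊓ A : IntermediateField k Ω) *
        Module.finrank k (K ⊓ B : IntermediateField k Ω) := by

  classical
  have hn : ∀ H : Subgroup (Ω ≃ₐ[k] Ω), H.Normal := fun H =>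
    ⟨fun a ha g => by rw [habel g a, mul_inv_cancel_right]; exact ha⟩
  have hrank : ∀ F : IntermediateField k Ω,
      Module.finrank k F = (IntermediateField.fixingSubgroup F).index := by
    intro F
    have h1 : Nat.card (IntermediateField.fixingSubgroup F) = Module.finrank F Ω := by
      exact IsGalois.card_fixingSubgroup_eq_finrank F
    have h2 : Module.finrank k F * Module.finrank F Ω = Module.finrank k Ω :=
      Module.finrank_mul_finrank k F Ω
    have h3 : Nat.card (Ω ≃ₐ[k] Ω) = Module.finrank k Ω := by
      exact IsGalois.card_aut_eq_finrank k Ω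
    have h4 : Nat.card (IntermediateField.fixingSubgroup F)
        * (IntermediateField.fixingSubgroup F).index = Nat.card (Ω ≃ₐ[k] Ω) :=
      Subgroup.card_mul_index _
    have hpos : 0 < Module.finrank F Ω := Module.finrank_pos
    apply Nat.eq_of_mul_eq_mul_right hpos
    rw [h2, ← h3, ← h4, h1, mul_comm]
  set e := IsGalois.intermediateFieldEquivSubgroup (F := k) (E := Ω) with he
  have emap : ∀ F : IntermediateField k Ω, e F = IntermediateField.fixingSubgroup F :=
    fun _ => rfl
  have hmapsup : ∀ F₁ F₂ : IntermediateField k Ω,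
      IntermediateField.fixingSubgroup (F₁ ⊔ F₂)
        = IntermediateField.fixingSubgroup F₁ ⊓ IntermediateField.fixingSubgroup F₂ :=
    fun F₁ F₂ => e.map_sup F₁ F₂
  have hmapinf : ∀ F₁ F₂ : IntermediateField k Ω,
      IntermediateField.fixingSubgroup (F₁ ⊓ F₂)
        = IntermediateField.fixingSubgroup F₁ ⊔ IntermediateField.fixingSubgroup F₂ :=
    fun F₁ F₂ => e.map_inf F₁ F₂
  have hAB1 : IntermediateField.fixingSubgroup A ⊔ IntermediateField.fixingSubgroup B = ⊤ := by
    rw [← hmapinf, hinf, IntermediateField.fixingSubgroup_bot]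
  have hAB2 : IntermediateField.fixingSubgroup A ⊓ IntermediateField.fixingSubgroup B = ⊥ := by
    rw [← hmapsup, hsup, IntermediateField.fixingSubgroup_top]
  rw [hrank K, hrank ((K ⊔ B) ⊓ A), hrank (K ⊓ B), hmapinf ((K ⊔ B)) A, hmapsup K B,
    hmapinf K B]
  exact index_identity' hn _ _ _ hAB1 hAB2
end

section
/- Let Ω/k be a finite Galois extension of fields whose Galois group is abelian, and let A and B be intermediate fields of Ω/k such that A·B = Ω and A ∩ B = k. Let K₁ and K₂ be intermediate fields of Ω/k, and set E_i := (K_i·B) ∩ A for i = 1,2 and E := ((K₁·K₂)·B) ∩ A. Then E = E₁·E₂. -/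
private lemma subgroup_aux {G : Type*} [Group G]
    (habel : ∀ σ τ : G, σ * τ = τ * σ)
    (a b g₁ g₂ : Subgroup G) (hab : a ⊓ b = ⊥) :
    ((g₁ ⊓ g₂) ⊓ b) ⊔ a = ((g₁ ⊓ b) ⊔ a) ⊓ ((g₂ ⊓ b) ⊔ a) := by
  letI : CommGroup G := { (inferInstance : Group G) with mul_comm := habel }
  apply le_antisymm
  · exact sup_le (le_inf
      (le_sup_of_le_left (inf_le_inf_right _ inf_le_left))
      (le_sup_of_le_left (inf_le_inf_right _ inf_le_right)))
      (le_inf le_sup_right le_sup_right)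
  · intro x hx
    rw [Subgroup.mem_inf, Subgroup.mem_sup, Subgroup.mem_sup] at hx
    rw [Subgroup.mem_sup]
    obtain ⟨⟨u₁, hu₁, a₁, ha₁, h1⟩, u₂, hu₂, a₂, ha₂, h2⟩ := hx
    have h := h1.trans h2.symm
    have hu : u₁ * u₂⁻¹ = a₂ * a₁⁻¹ := by
      rw [mul_inv_eq_iff_eq_mul]
      have hu1 : u₁ = u₂ * a₂ * a₁⁻¹ := by
        rw [← h]; group
      rw [hu1, mul_comm u₂ a₂, mul_assoc, mul_comm u₂ a₁⁻¹, ← mul_assoc]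
    have key : u₁ * u₂⁻¹ ∈ a ⊓ b :=
      Subgroup.mem_inf.mpr ⟨hu ▸ a.mul_mem ha₂ (a.inv_mem ha₁),
        b.mul_mem hu₁.2 (b.inv_mem hu₂.2)⟩
    rw [hab, Subgroup.mem_bot, mul_inv_eq_one] at key
    have hueq : u₁ = u₂ := key
    exact ⟨u₁, ⟨⟨hu₁.1, hueq ▸ hu₂.1⟩, hu₁.2⟩, a₁, ha₁, h1⟩

/-- Let `Ω/k` be a finite Galois extension with abelian Galois group,
and `A`, `B` intermediate fields with `A·B = Ω` and `A ∩ B = k`. For intermediate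
fields `K₁`, `K₂`, setting `Eᵢ := (Kᵢ·B) ∩ A` and `E := ((K₁·K₂)·B) ∩ A`, we have
`E = E₁·E₂`. -/
theorem inf_compositum_distrib_of_galois_correspondence
    (k Ω : Type*) [Field k] [Field Ω] [Algebra k Ω]
    [FiniteDimensional k Ω] [IsGalois k Ω]
    (habel : ∀ σ τ : Ω ≃ₐ[k] Ω, σ * τ = τ * σ)
    (A B : IntermediateField k Ω) (hsup : A ⊔ B = ⊤) (hinf : A ⊓ B = ⊥)
    (K₁ K₂ : IntermediateField k Ω) :
    ((K₁ ⊔ K₂) ⊔ B) ⊓ A = ((K₁ ⊔ B) ⊓ A) ⊔ ((K₂ ⊔ B) ⊓ A) := by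
  set e := (IsGalois.intermediateFieldEquivSubgroup (F := k) (E := Ω)) with he
  apply e.injective
  have hab : OrderDual.ofDual (e A) ⊓ OrderDual.ofDual (e B) = ⊥ := by
    have := congrArg e hsup
    rw [map_sup, map_top] at this
    exact this
  have goal := subgroup_aux habel (OrderDual.ofDual (e A)) (OrderDual.ofDual (e B))
    (OrderDual.ofDual (e K₁)) (OrderDual.ofDual (e K₂)) hab
  rw [map_inf, map_sup, map_sup, map_sup, map_inf, map_sup, map_inf, map_sup]
  exact goal
end

section
/- Let q be a prime power and t ≥ 2 a divisor of q−1. Let P₁,…,P_r be distinct monic irreducible polynomials in 𝔽_q[T], let α₁,…,α_r be integers with 1 ≤ α_i ≤ t−1, let D = P₁^{α₁}⋯P_r^{α_r} and γ = (−1)^{deg D}. Assume X^t − γD is irreducible over k = 𝔽_q(T), and let K = k(β) where β is a root of X^t − γD in a fixed algebraic closure Ω of k. Fix i, set d_i = gcd(t,α_i) and γ_i = (−1)^{(α_i/d_i)·deg P_i}, and let ξ_i ∈ Ω be a root of X^{t/d_i} − γ_i·P_i^{α_i/d_i}. Then the extension K(ξ_i)/K is unramified over P_i: every prime of the integral closure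 of 𝔽_q[T] in K(ξ_i) lying over P_i has ramification index 1 over the prime of O_K below it. -/
open Polynomial

/-- The natural map between integral closures induced by an algebra tower. -/
noncomputable def icMap (R A B : Type*) [CommRing R] [CommRing A] [CommRing B]
    [Algebra R A] [Algebra R B] [Algebra A B] [IsScalarTower R A B] :
    integralClosure R A →+* integralClosure R B where
  toFun x := ⟨algebraMap A B x.1, IsIntegral.map (IsScalarTower.toAlgHom R A B) x.2⟩
  map_one' := by ext; simp
  map_mul' x y := by ext; simp
  map_zero' := by ext; simp
  map_add' x y := by ext; simp

/-- The inclusion of rings of integers (integral closures of `𝔽_q[T]`) attached to an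
intermediate field `K` of an extension `L` of `k = 𝔽_q(T)`. -/
noncomputable def icMapIF (Fq L : Type*) [Field Fq] [Field L]
    [Algebra (Polynomial Fq) L] [Algebra (RatFunc Fq) L]
    [IsScalarTower (Polynomial Fq) (RatFunc Fq) L]
    (K : IntermediateField (RatFunc Fq) L) :
    integralClosure (Polynomial Fq) K →+* integralClosure (Polynomial Fq) L :=
  haveI : IsScalarTower (Polynomial Fq) (↥K) L := IsScalarTower.of_algebraMap_eq fun _ => rfl
  icMap (Polynomial Fq) K L

/-- The ramification index of `P` over `p` along a ring hom `f` (the pre-2025 Mathlib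
`Ideal.ramificationIdx f p P`). -/
noncomputable def ramificationIdxOfHom {R S : Type*} [CommRing R] [CommRing S] (f : R →+* S)
    (p : Ideal R) (P : Ideal S) : ℕ :=
  sSup {n | Ideal.map f p ≤ P ^ n}

set_option maxHeartbeats 4000000 in
set_option synthInstance.maxHeartbeats 1000000 in
/-- With `K = k(β)` a Kummer extension given by `β^t = γD`, fix `i`,
set `d_i = gcd(t, α_i)`, `γ_i = (−1)^{(α_i/d_i)·deg P_i}`, and let `ξ` be a root of
`X^{t/d_i} − γ_i·P_i^{α_i/d_i}`. Then `K(ξ)/K` is unramified over `P_i`: every prime of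
the integral closure of `𝔽_q[T]` in `K(ξ)` lying over `P_i` has ramification index `1`
over the prime of `O_K` below it. -/
theorem kummer_adjoin_unramified_over_P
    (Fq : Type*) [Field Fq] [Fintype Fq]
    (t : ℕ) (ht2 : 2 ≤ t) (htq : t ∣ Fintype.card Fq - 1)
    (r : ℕ) (P : Fin r → Polynomial Fq)
    (hPmonic : ∀ i, (P i).Monic) (hPirr : ∀ i, Irreducible (P i))
    (hPdist : Function.Injective P)
    (α : Fin r → ℕ) (hα1 : ∀ i, 1 ≤ α i) (hα2 : ∀ i, α i ≤ t - 1)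
    (D : Polynomial Fq) (hD : D = ∏ i, P i ^ α i)
    (γ : Fq) (hγ : γ = (-1) ^ D.natDegree)
    (hirr : Irreducible
      (X ^ t - C (algebraMap (Polynomial Fq) (RatFunc Fq) (C γ * D)) : Polynomial (RatFunc Fq)))
    (L : Type*) [Field L] [Algebra (Polynomial Fq) L] [Algebra (RatFunc Fq) L]
    [IsScalarTower (Polynomial Fq) (RatFunc Fq) L]
    (β : L) (hβ : β ^ t = algebraMap (Polynomial Fq) L (C γ * D))
    (K : IntermediateField (RatFunc Fq) L)
    (hK : K = IntermediateField.adjoin (RatFunc Fq) {β})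
    (i : Fin r)
    (γi : Fq) (hγi : γi = (-1) ^ ((α i / Nat.gcd t (α i)) * (P i).natDegree))
    (ξ : L) (hξ : ξ ^ (t / Nat.gcd t (α i))
      = algebraMap (Polynomial Fq) L (C γi * P i ^ (α i / Nat.gcd t (α i))))
    (hgenL : IntermediateField.adjoin (RatFunc Fq) {β, ξ} = ⊤)
    (𝔮 : Ideal (integralClosure (Polynomial Fq) L)) (h𝔮 : 𝔮.IsPrime)
    (hlies : Ideal.comap (algebraMap (Polynomial Fq) (integralClosure (Polynomial Fq) L)) 𝔮
      = Ideal.span {P i}) :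
    ramificationIdxOfHom (icMapIF Fq L K)
      (Ideal.comap (icMapIF Fq L K) 𝔮) 𝔮 = 1 := by
  classical
  -- notation
  set d := Nat.gcd t (α i) with hd
  set n := t / d with hn
  set m := α i / d with hm
  set E : (Polynomial Fq) := ∏ j ∈ Finset.univ.erase i, P j ^ α j with hE
  -- numeric facts
  have htpos : 0 < t := by omega
  have hdt : d ∣ t := Nat.gcd_dvd_left t (α i)
  have hdα : d ∣ α i := Nat.gcd_dvd_right t (α i)
  have hdpos : 0 < d := Nat.gcd_pos_of_pos_left _ htpos
  have hdn : d * n = t := Nat.mul_div_cancel' hdt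
  have hdm : d * m = α i := Nat.mul_div_cancel' hdα
  have hdlt : d < t := by
    have h1 := Nat.le_of_dvd (hα1 i) hdα
    have := hα2 i
    omega
  have hn2 : 2 ≤ n := by
    rcases Nat.lt_or_ge n 2 with h | h
    · interval_cases n <;> omega
    · exact h
  have hnt : n ∣ t := Dvd.intro_left d hdn
  have hmt : m * t = α i * n := by
    calc m * t = m * (d * n) := by rw [hdn]
    _ = (d * m) * n := by ring
    _ = α i * n := by rw [hdm]
  -- characteristic facts
  have hq2 : 2 ≤ Fintype.card Fq := Fintype.one_lt_card
  have hcast : ∀ s : ℕ, s ∣ t → (s : Fq) ≠ 0 := by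
    intro s hs h0
    have hchar : (ringChar Fq) ∣ s := (CharP.cast_eq_zero_iff Fq _ s).mp h0
    haveI : CharP Fq (ringChar Fq) := ringChar.charP Fq
    obtain ⟨e, hprime, he⟩ := FiniteField.card Fq (ringChar Fq)
    have h1 : ringChar Fq ∣ Fintype.card Fq - 1 := hchar.trans (hs.trans htq)
    have h2 : ringChar Fq ∣ Fintype.card Fq := by
      rw [he]
      exact dvd_pow_self _ e.ne_zero
    have := Nat.dvd_sub h2 h1
    rw [Nat.sub_sub_self (by omega)] at this
    exact hprime.one_lt.ne' (Nat.dvd_one.mp this)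
  -- nonzero elements
  have hPne : ∀ j, P j ≠ 0 := fun j => (hPirr j).ne_zero
  have hDne : D ≠ 0 := by
    rw [hD]; exact Finset.prod_ne_zero_iff.mpr fun j _ => pow_ne_zero _ (hPne j)
  have hEne : E ≠ 0 := Finset.prod_ne_zero_iff.mpr fun j _ => pow_ne_zero _ (hPne j)
  have hγsq : γ * γ = 1 := by
    rw [hγ, ← pow_add, ← two_mul, pow_mul, neg_one_sq, one_pow]
  have hγne : γ ≠ 0 := by rw [hγ]; exact pow_ne_zero _ (neg_ne_zero.mpr one_ne_zero)
  have hγine : γi ≠ 0 := by rw [hγi]; exact pow_ne_zero _ (neg_ne_zero.mpr one_ne_zero)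
  have hDE : D = P i ^ α i * E := by
    rw [hD, hE, ← Finset.mul_prod_erase _ _ (Finset.mem_univ i)]
  -- injectivity facts
  have hinjRk : Function.Injective (algebraMap (Polynomial Fq) (RatFunc Fq)) := IsFractionRing.injective (Polynomial Fq) (RatFunc Fq)
  have hcastR : ∀ s : ℕ, s ∣ t → ((s : ℕ) : (Polynomial Fq)) ≠ 0 := by
    intro s hs h0
    apply hcast s hs
    have : (C ((s : ℕ) : Fq) : (Polynomial Fq)) = 0 := by rw [C_eq_natCast]; exact_mod_cast h0
    exact_mod_cast (C_eq_zero.mp this)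
  have hcastk : ∀ s : ℕ, s ∣ t → ((s : ℕ) : (RatFunc Fq)) ≠ 0 := by
    intro s hs h0
    apply hcastR s hs
    apply hinjRk
    rw [map_natCast, map_zero]
    exact h0
  -- β, ξ are integral and separable over (RatFunc Fq)
  have htne : t ≠ 0 := by omega
  have hnne : n ≠ 0 := by omega
  have hbD : algebraMap (RatFunc Fq) L (algebraMap (Polynomial Fq) (RatFunc Fq) (C γ * D)) = algebraMap (Polynomial Fq) L (C γ * D) :=
    (IsScalarTower.algebraMap_apply (Polynomial Fq) (RatFunc Fq) L _).symm
  have hbP : algebraMap (RatFunc Fq) L (algebraMap (Polynomial Fq) (RatFunc Fq) (C γi * P i ^ m)) = algebraMap (Polynomial Fq) L (C γi * P i ^ m) :=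
    (IsScalarTower.algebraMap_apply (Polynomial Fq) (RatFunc Fq) L _).symm
  have hbDne : algebraMap (Polynomial Fq) (RatFunc Fq) (C γ * D) ≠ 0 := by
    simp only [ne_eq, map_eq_zero_iff _ hinjRk]
    exact mul_ne_zero (by simpa using hγne) hDne
  have hbPne : algebraMap (Polynomial Fq) (RatFunc Fq) (C γi * P i ^ m) ≠ 0 := by
    simp only [ne_eq, map_eq_zero_iff _ hinjRk]
    exact mul_ne_zero (by simpa using hγine) (pow_ne_zero _ (hPne i))
  have hβint : IsIntegral (RatFunc Fq) β :=
    ⟨X ^ t - C (algebraMap (Polynomial Fq) (RatFunc Fq) (C γ * D)), monic_X_pow_sub_C _ htne, by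
      simp only [eval₂_sub, eval₂_pow, eval₂_X, eval₂_C, hbD, hβ, sub_self]⟩
  have hξint : IsIntegral (RatFunc Fq) ξ :=
    ⟨X ^ n - C (algebraMap (Polynomial Fq) (RatFunc Fq) (C γi * P i ^ m)), monic_X_pow_sub_C _ hnne, by
      simp only [eval₂_sub, eval₂_pow, eval₂_X, eval₂_C, hbP, hξ, sub_self]⟩
  have hβsep : IsSeparable (RatFunc Fq) β :=
    (separable_X_pow_sub_C _ (hcastk t dvd_rfl) hbDne).of_dvd
      (minpoly.dvd (RatFunc Fq) β (by
        simp only [map_sub, map_pow, aeval_X, aeval_C, hbD, hβ, sub_self]))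
  have hξsep : IsSeparable (RatFunc Fq) ξ :=
    (separable_X_pow_sub_C _ (hcastk n hnt) hbPne).of_dvd
      (minpoly.dvd (RatFunc Fq) ξ (by
        simp only [map_sub, map_pow, aeval_X, aeval_C, hbP, hξ, sub_self]))
  -- finiteness and separability of L over (RatFunc Fq)
  haveI hFD : FiniteDimensional (RatFunc Fq) L := by
    haveI : FiniteDimensional (RatFunc Fq) (IntermediateField.adjoin (RatFunc Fq) {β, ξ}) := by
      haveI : Finite ({β, ξ} : Set L) := ((Set.finite_singleton ξ).insert β).to_subtype
      exact IntermediateField.finiteDimensional_adjoin (by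
        rintro x (rfl | rfl)
        · exact hβint
        · exact hξint)
    rw [hgenL] at this
    exact Module.Finite.equiv IntermediateField.topEquiv.toLinearEquiv
  haveI hSep : Algebra.IsSeparable (RatFunc Fq) L := by
    haveI : Algebra.IsSeparable (RatFunc Fq) (IntermediateField.adjoin (RatFunc Fq) {β, ξ}) := by
      refine (IntermediateField.isSeparable_adjoin_iff_isSeparable (RatFunc Fq) L).2 ?_
      rintro x (rfl | rfl)
      · exact hβsep
      · exact hξsep
    rw [hgenL] at this
    exact Algebra.IsSeparable.of_equiv_equiv (RingEquiv.refl (RatFunc Fq))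
      (IntermediateField.topEquiv (F := (RatFunc Fq)) (E := L)).toRingEquiv (by ext x; rfl)
  -- instances for K
  haveI : FiniteDimensional (RatFunc Fq) ↥K := FiniteDimensional.left (RatFunc Fq) ↥K L
  haveI : Algebra.IsSeparable (RatFunc Fq) ↥K := Algebra.isSeparable_tower_bot_of_isSeparable (RatFunc Fq) ↥K L
  haveI : Algebra.IsSeparable ↥K L := Algebra.isSeparable_tower_top_of_isSeparable (RatFunc Fq) ↥K L
  haveI : FiniteDimensional ↥K L := FiniteDimensional.right (RatFunc Fq) ↥K L
  haveI : IsFractionRing (integralClosure (Polynomial Fq) ↥K) ↥K :=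
    integralClosure.isFractionRing_of_finite_extension (RatFunc Fq) ↥K
  haveI : IsFractionRing (integralClosure (Polynomial Fq) L) L :=
    integralClosure.isFractionRing_of_finite_extension (RatFunc Fq) L
  haveI : IsDedekindDomain (integralClosure (Polynomial Fq) ↥K) :=
    IsIntegralClosure.isDedekindDomain (Polynomial Fq) (RatFunc Fq) ↥K _
  haveI : IsDedekindDomain (integralClosure (Polynomial Fq) L) :=
    IsIntegralClosure.isDedekindDomain (Polynomial Fq) (RatFunc Fq) L _
  -- algebra structure of O_L over O_K
  haveI : IsScalarTower (Polynomial Fq) (↥K) L := IsScalarTower.of_algebraMap_eq fun _ => rfl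
  letI : Algebra (integralClosure (Polynomial Fq) ↥K) (integralClosure (Polynomial Fq) L) :=
    (icMapIF Fq L K).toAlgebra
  haveI : IsScalarTower (integralClosure (Polynomial Fq) ↥K) (↥K) L :=
    IsScalarTower.of_algebraMap_eq fun _ => rfl
  haveI : IsScalarTower (integralClosure (Polynomial Fq) ↥K)
      (integralClosure (Polynomial Fq) L) L :=
    IsScalarTower.of_algebraMap_eq fun _ => rfl
  haveI : IsScalarTower (Polynomial Fq) (integralClosure (Polynomial Fq) ↥K) L :=
    IsScalarTower.of_algebraMap_eq fun x =>
      IsScalarTower.algebraMap_apply (Polynomial Fq) (↥K) L x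
  haveI : IsScalarTower (Polynomial Fq) (integralClosure (Polynomial Fq) ↥K)
      (integralClosure (Polynomial Fq) L) :=
    IsScalarTower.of_algebraMap_eq fun x =>
      Subtype.ext (IsScalarTower.algebraMap_apply (Polynomial Fq) (↥K) L x)
  have hinj : Function.Injective (icMapIF Fq L K) := by
    intro x y hxy
    apply Subtype.ext
    apply (algebraMap (↥K) L).injective
    have h2 : ((icMapIF Fq L K) x : L) = ((icMapIF Fq L K) y : L) := congrArg Subtype.val hxy
    exact h2
  haveI : Module.IsTorsionFree (integralClosure (Polynomial Fq) ↥K)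
      (integralClosure (Polynomial Fq) L) :=
    Module.isTorsionFree_iff_algebraMap_injective.mpr hinj
  haveI : Algebra.IsIntegral (Polynomial Fq) (integralClosure (Polynomial Fq) ↥K) := by
    constructor
    intro x
    have hval : Function.Injective
        (algebraMap (↥(integralClosure (Polynomial Fq) ↥K)) ↥K) := by
      intro a b h
      exact Subtype.ext h
    exact (isIntegral_algebraMap_iff hval).mp x.2
  haveI : IsIntegralClosure (integralClosure (Polynomial Fq) L)
      (integralClosure (Polynomial Fq) ↥K) L := by
    refine ⟨Subtype.val_injective, fun {x} => ⟨fun hx => ?_, fun hx => ?_⟩⟩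
    · exact ⟨⟨x, isIntegral_trans x hx⟩, rfl⟩
    · obtain ⟨y, hy⟩ := hx
      rw [← hy]
      exact IsIntegral.tower_top y.2
  haveI : Module.Finite (Polynomial Fq) (integralClosure (Polynomial Fq) L) :=
    IsIntegralClosure.finite (Polynomial Fq) (RatFunc Fq) L _
  haveI : Module.Finite (integralClosure (Polynomial Fq) ↥K)
      (integralClosure (Polynomial Fq) L) :=
    Module.Finite.of_restrictScalars_finite (Polynomial Fq) _ _
  -- injectivity of algebra maps from Fq[T]
  have hinjRL : Function.Injective (algebraMap (Polynomial Fq) L) := by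
    rw [IsScalarTower.algebraMap_eq (Polynomial Fq) (RatFunc Fq) L]
    exact (algebraMap (RatFunc Fq) L).injective.comp hinjRk
  have hinjROK : Function.Injective
      (algebraMap (Polynomial Fq) (integralClosure (Polynomial Fq) ↥K)) := by
    intro x y h
    apply hinjRL
    show ((algebraMap (Polynomial Fq) (integralClosure (Polynomial Fq) ↥K) x : ↥K) : L)
      = ((algebraMap (Polynomial Fq) (integralClosure (Polynomial Fq) ↥K) y : ↥K) : L)
    rw [h]
  have hinjROL : Function.Injective
      (algebraMap (Polynomial Fq) (integralClosure (Polynomial Fq) L)) := by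
    intro x y h
    apply hinjRL
    show ((algebraMap (Polynomial Fq) (integralClosure (Polynomial Fq) L) x : L))
      = ((algebraMap (Polynomial Fq) (integralClosure (Polynomial Fq) L) y : L))
    rw [h]
  -- the prime below 𝔮 in O_K
  haveI h𝔭p : (Ideal.comap (icMapIF Fq L K) 𝔮).IsPrime := Ideal.IsPrime.comap _
  have hPiOK : algebraMap (Polynomial Fq) (integralClosure (Polynomial Fq) ↥K) (P i)
      ∈ Ideal.comap (icMapIF Fq L K) 𝔮 := by
    rw [Ideal.mem_comap]
    have h1 : (icMapIF Fq L K) (algebraMap (Polynomial Fq) _ (P i))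
        = algebraMap (Polynomial Fq) (integralClosure (Polynomial Fq) L) (P i) :=
      (IsScalarTower.algebraMap_apply (Polynomial Fq) (integralClosure (Polynomial Fq) ↥K)
        (integralClosure (Polynomial Fq) L) (P i)).symm
    rw [h1, ← Ideal.mem_comap, hlies]
    exact Ideal.subset_span rfl
  have h𝔭ne : Ideal.comap (icMapIF Fq L K) 𝔮 ≠ ⊥ := by
    intro h0
    have h1 : algebraMap (Polynomial Fq) (integralClosure (Polynomial Fq) ↥K) (P i) = 0 := by
      rw [← Ideal.mem_bot, ← h0]; exact hPiOK
    exact hPne i (hinjROK (by rw [h1, map_zero]))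
  haveI h𝔭max : (Ideal.comap (icMapIF Fq L K) 𝔮).IsMaximal :=
    Ring.DimensionLEOne.maximalOfPrime h𝔭ne h𝔭p
  -- the element θ
  have hCPne : (C γ * P i ^ α i : Polynomial Fq) ≠ 0 :=
    mul_ne_zero (by simpa using hγne) (pow_ne_zero _ (hPne i))
  have hc0ne : algebraMap (Polynomial Fq) L (C γ * P i ^ α i) ≠ 0 :=
    fun h => hCPne (hinjRL (by rw [h, map_zero]))
  have hβne : β ≠ 0 := by
    intro h
    have h1 : algebraMap (Polynomial Fq) L (C γ * D) = 0 := by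
      rw [← hβ, h, zero_pow htne]
    have h2 : (C γ * D : Polynomial Fq) = 0 := hinjRL (by rw [h1, map_zero])
    exact mul_ne_zero (by simpa using hγne) hDne h2
  set θL : L := ξ * β ^ (t-1) * (algebraMap (Polynomial Fq) L (C γ * P i ^ α i))⁻¹ with hθL
  have hpoly : ((C γi * P i ^ m) ^ t * (C γ * D) ^ ((t-1)*n) : Polynomial Fq)
      = (C (γi ^ t * γ ^ n) * E ^ ((t-1)*n)) * ((C γ * P i ^ α i) ^ (n*t)) := by
    have hexp : m * t + α i * ((t-1)*n) = α i * (n*t) := by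
      have h0 : 1 + (t-1) = t := by omega
      have h1 : n + (t-1)*n = n*t := by
        calc n + (t-1)*n = (1 + (t-1)) * n := by ring
          _ = t * n := by rw [h0]
          _ = n * t := by ring
      calc m*t + α i*((t-1)*n) = α i * n + α i * ((t-1)*n) := by rw [hmt]
        _ = α i * (n + (t-1)*n) := by ring
        _ = α i * (n*t) := by rw [h1]
    have hγsqC : (C γ : Polynomial Fq) * C γ = 1 := by rw [← C_mul, hγsq, C_1]
    have hγexpC : (C γ : Polynomial Fq) ^ ((t-1)*n) = (C γ) ^ n * (C γ) ^ (n*t) := by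
      have h3 : (t-1) + 2 = t + 1 := by omega
      have hee : n + n*t = (t-1)*n + 2*n := by
        calc n + n*t = (t+1) * n := by ring
          _ = ((t-1) + 2) * n := by rw [h3]
          _ = (t-1)*n + 2*n := by ring
      calc (C γ : Polynomial Fq) ^ ((t-1)*n)
          = (C γ) ^ ((t-1)*n) * ((C γ * C γ) ^ n) := by rw [hγsqC, one_pow, mul_one]
        _ = (C γ) ^ ((t-1)*n + 2*n) := by ring
        _ = (C γ) ^ (n + n*t) := by rw [hee]
        _ = (C γ) ^ n * (C γ) ^ (n*t) := by rw [pow_add]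
    calc ((C γi * P i ^ m) ^ t * (C γ * D) ^ ((t-1)*n) : Polynomial Fq)
        = (C γi)^t * (C γ)^((t-1)*n) * P i ^ (m*t + α i * ((t-1)*n)) * E ^ ((t-1)*n) := by
          rw [hDE, pow_add]; ring
      _ = (C γi)^t * ((C γ)^n * (C γ)^(n*t)) * P i ^ (α i * (n*t)) * E ^ ((t-1)*n) := by
          rw [hexp, hγexpC]
      _ = (C (γi ^ t * γ ^ n) * E ^ ((t-1)*n)) * ((C γ * P i ^ α i) ^ (n*t)) := by
          rw [C_mul, C_pow, C_pow]; ring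
  have hkey : θL ^ (n*t) = algebraMap (Polynomial Fq) L (C (γi ^ t * γ ^ n) * E ^ ((t-1)*n)) := by
    have h1 : θL ^ (n*t) * (algebraMap (Polynomial Fq) L (C γ * P i ^ α i)) ^ (n*t)
        = (ξ ^ n) ^ t * (β ^ t) ^ ((t-1)*n) := by
      calc θL ^ (n*t) * (algebraMap (Polynomial Fq) L (C γ * P i ^ α i)) ^ (n*t)
          = ξ ^ (n*t) * (β ^ (t-1)) ^ (n*t) *
            ((algebraMap (Polynomial Fq) L (C γ * P i ^ α i))⁻¹ *
              algebraMap (Polynomial Fq) L (C γ * P i ^ α i)) ^ (n*t) := by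
            rw [hθL]; ring
        _ = ξ ^ (n*t) * (β ^ (t-1)) ^ (n*t) := by
            rw [inv_mul_cancel₀ hc0ne, one_pow, mul_one]
        _ = (ξ ^ n) ^ t * (β ^ t) ^ ((t-1)*n) := by
            rw [← pow_mul ξ n t, ← pow_mul β t ((t-1)*n), ← pow_mul β (t-1) (n*t),
              show (t-1) * (n*t) = t * ((t-1)*n) from by ring]
    have h2 : (ξ ^ n) ^ t * (β ^ t) ^ ((t-1)*n)
        = algebraMap (Polynomial Fq) L ((C γi * P i ^ m) ^ t * (C γ * D) ^ ((t-1)*n)) := by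
      rw [hξ, hβ, ← map_pow, ← map_pow, ← map_mul]
    have h3 := h1.trans (h2.trans (by rw [hpoly, map_mul, map_pow]))
    exact mul_right_cancel₀ (pow_ne_zero _ hc0ne) h3
  have hntne : n * t ≠ 0 := Nat.mul_ne_zero hnne htne
  have hθint : IsIntegral (Polynomial Fq) θL :=
    ⟨X ^ (n*t) - C (C (γi ^ t * γ ^ n) * E ^ ((t-1)*n)), monic_X_pow_sub_C _ hntne, by
      simp only [eval₂_sub, eval₂_pow, eval₂_X, eval₂_C, hkey, sub_self]⟩
  set θ : ↥(integralClosure (Polynomial Fq) L) := ⟨θL, hθint⟩ with hθ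
  -- w = θ^n lies in O_K
  have hβK : β ∈ K := by
    rw [hK]; exact IntermediateField.mem_adjoin_simple_self (RatFunc Fq) β
  have halgK : ∀ z : Polynomial Fq, algebraMap (Polynomial Fq) L z ∈ K := fun z => by
    rw [IsScalarTower.algebraMap_apply (Polynomial Fq) (RatFunc Fq) L]
    exact K.algebraMap_mem _
  have hwK : θL ^ n ∈ K := by
    have h1 : θL ^ n = algebraMap (Polynomial Fq) L (C γi * P i ^ m) * (β ^ (t-1)) ^ n *
        (((algebraMap (Polynomial Fq) L (C γ * P i ^ α i)) ^ n)⁻¹) := by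
      rw [hθL, mul_pow, mul_pow, hξ, inv_pow]
    rw [h1]
    exact K.mul_mem (K.mul_mem (halgK (C γi * P i ^ m)) (pow_mem (pow_mem hβK (t-1)) n))
      (K.inv_mem (pow_mem (halgK (C γ * P i ^ α i)) n))
  have hwint : IsIntegral (Polynomial Fq) (⟨θL ^ n, hwK⟩ : ↥K) := by
    have h1 : IsIntegral (Polynomial Fq) (algebraMap (↥K) L ⟨θL ^ n, hwK⟩) := hθint.pow n
    exact (isIntegral_algebraMap_iff (algebraMap (↥K) L).injective).mp h1
  set w : ↥(integralClosure (Polynomial Fq) ↥K) := ⟨⟨θL ^ n, hwK⟩, hwint⟩ with hw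
  have hθn : θ ^ n = algebraMap (↥(integralClosure (Polynomial Fq) ↥K))
      (↥(integralClosure (Polynomial Fq) L)) w := by
    apply Subtype.ext
    show ((θ ^ n : ↥(integralClosure (Polynomial Fq) L)) : L) = θL ^ n
    rw [SubmonoidClass.coe_pow]
  -- the minimal polynomial of θ over O_K divides X^n - w
  have hθR : IsIntegral (Polynomial Fq) θ := by
    have hval : Function.Injective (algebraMap (↥(integralClosure (Polynomial Fq) L)) L) := by
      intro a b h; exact Subtype.ext h
    exact (isIntegral_algebraMap_iff hval).mp (by exact hθint)
  have hθOK : IsIntegral (↥(integralClosure (Polynomial Fq) ↥K)) θ := hθR.tower_top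
  have hfdvd : minpoly (↥(integralClosure (Polynomial Fq) ↥K)) θ ∣ (X ^ n - C w) :=
    minpoly.isIntegrallyClosed_dvd hθOK (by
      rw [map_sub, map_pow, aeval_X, aeval_C, hθn, sub_self])
  obtain ⟨g, hfg⟩ := hfdvd
  have hder : ((n : ℕ) : ↥(integralClosure (Polynomial Fq) L)) * θ ^ (n-1)
      = aeval θ (derivative (minpoly (↥(integralClosure (Polynomial Fq) ↥K)) θ)) * aeval θ g := by
    have h1 := congrArg (fun q => aeval θ (derivative q)) hfg
    simp only [derivative_sub, derivative_C, derivative_X_pow, derivative_mul, sub_zero,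
      map_mul, map_add, map_natCast, aeval_X, aeval_C, map_pow, minpoly.aeval,
      zero_mul, add_zero] at h1
    exact h1
  -- the derivative of the minimal polynomial at θ is not in 𝔮
  have hfθ : aeval θ (derivative (minpoly (↥(integralClosure (Polynomial Fq) ↥K)) θ)) ∉ 𝔮 := by
    intro hmem
    have h1 : ((n : ℕ) : ↥(integralClosure (Polynomial Fq) L)) * θ ^ (n-1) ∈ 𝔮 := by
      rw [hder]
      exact Ideal.mul_mem_right _ _ hmem
    rcases h𝔮.mem_or_mem h1 with h | h
    · have hu : IsUnit ((n : ℕ) : ↥(integralClosure (Polynomial Fq) L)) := by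
        have h2 : ((n : ℕ) : ↥(integralClosure (Polynomial Fq) L))
            = algebraMap (Polynomial Fq) _ (C ((n : ℕ) : Fq)) := by
          rw [C_eq_natCast, map_natCast]
        rw [h2]
        exact (isUnit_C.mpr (hcast n hnt).isUnit).map _
      exact h𝔮.ne_top (Ideal.eq_top_of_isUnit_mem _ h hu)
    · have hθq : θ ∈ 𝔮 := h𝔮.mem_of_pow_mem _ h
      have hpow : θ ^ (n*t) ∈ 𝔮 := Ideal.pow_mem_of_mem _ hθq _ (by omega)
      have heq : θ ^ (n*t) = algebraMap (Polynomial Fq) (↥(integralClosure (Polynomial Fq) L))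
          (C (γi ^ t * γ ^ n) * E ^ ((t-1)*n)) := by
        apply Subtype.ext
        rw [SubmonoidClass.coe_pow]
        exact hkey
      rw [heq, map_mul] at hpow
      rcases h𝔮.mem_or_mem hpow with h' | h'
      · have hu : IsUnit (algebraMap (Polynomial Fq) (↥(integralClosure (Polynomial Fq) L))
            (C (γi ^ t * γ ^ n))) :=
          (isUnit_C.mpr (mul_ne_zero (pow_ne_zero _ hγine) (pow_ne_zero _ hγne)).isUnit).map _
        exact h𝔮.ne_top (Ideal.eq_top_of_isUnit_mem _ h' hu)
      · rw [map_pow] at h'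
        have hE𝔮 : algebraMap (Polynomial Fq) (↥(integralClosure (Polynomial Fq) L)) E ∈ 𝔮 :=
          h𝔮.mem_of_pow_mem _ h'
        have hEspan : E ∈ Ideal.span {P i} := by
          rw [← hlies]; exact hE𝔮
        have hdvdE : P i ∣ E := Ideal.mem_span_singleton.mp hEspan
        have hprime : Prime (P i) := UniqueFactorizationMonoid.irreducible_iff_prime.mp (hPirr i)
        rw [hE] at hdvdE
        obtain ⟨j, hj, hdj⟩ := hprime.exists_mem_finset_dvd hdvdE
        have hPij : P i ∣ P j := hprime.dvd_of_dvd_pow hdj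
        have hij : P i = P j := eq_of_monic_of_associated (hPmonic i) (hPmonic j)
          ((hPirr i).associated_of_dvd (hPirr j) hPij)
        exact Finset.ne_of_mem_erase hj (hPdist hij.symm)
  -- θ generates L over K
  have hadjKξ : IntermediateField.adjoin (↥K) {ξ} = ⊤ := by
    apply IntermediateField.restrictScalars_injective (RatFunc Fq)
    rw [IntermediateField.restrictScalars_top, eq_top_iff, ← hgenL]
    apply IntermediateField.adjoin_le_iff.mpr
    rintro x (rfl | rfl)
    · exact IntermediateField.algebraMap_mem
        (IntermediateField.adjoin (↥K) {ξ}) (⟨x, hβK⟩ : ↥K)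
    · exact IntermediateField.mem_adjoin_simple_self (↥K) x
  have hξKint : IsIntegral (↥K) ξ := hξint.tower_top
  have hadjAlgξ : Algebra.adjoin (↥K) ({ξ} : Set L) = ⊤ := by
    have h1 := IntermediateField.adjoin_simple_toSubalgebra_of_isAlgebraic hξKint.isAlgebraic
    rw [← h1, hadjKξ]
    rfl
  have hadjθ : Algebra.adjoin (↥K)
      {(algebraMap (↥(integralClosure (Polynomial Fq) L)) L) θ} = ⊤ := by
    rw [eq_top_iff, ← hadjAlgξ]
    apply Algebra.adjoin_le
    intro x hxx
    rw [Set.mem_singleton_iff] at hxx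
    rw [hxx]
    have humem : algebraMap (Polynomial Fq) L (C γ * P i ^ α i) * (β ^ (t-1))⁻¹ ∈ K :=
      K.mul_mem (halgK (C γ * P i ^ α i)) (K.inv_mem (pow_mem hβK (t-1)))
    have hx : ξ = (algebraMap (↥K) L) ⟨_, humem⟩ * θL := by
      show ξ = (algebraMap (Polynomial Fq) L (C γ * P i ^ α i) * (β ^ (t-1))⁻¹) * θL
      have hb1 : β ^ (t-1) ≠ 0 := pow_ne_zero _ hβne
      rw [hθL]
      calc ξ = ξ * ((β ^ (t-1)) * (β ^ (t-1))⁻¹) *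
            ((algebraMap (Polynomial Fq) L (C γ * P i ^ α i)) *
             (algebraMap (Polynomial Fq) L (C γ * P i ^ α i))⁻¹) := by
            rw [mul_inv_cancel₀ hb1, mul_inv_cancel₀ hc0ne, mul_one, mul_one]
        _ = (algebraMap (Polynomial Fq) L (C γ * P i ^ α i) * (β ^ (t-1))⁻¹) *
            (ξ * β ^ (t-1) * (algebraMap (Polynomial Fq) L (C γ * P i ^ α i))⁻¹) := by ring
    rw [hx]
    exact Subalgebra.mul_mem _ (Subalgebra.algebraMap_mem _ _)
      (Algebra.subset_adjoin rfl)
  -- final computation with the different ideal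
  change Ideal.ramificationIdx' (Ideal.comap (icMapIF Fq L K) 𝔮) 𝔮 = 1
  have hmaple : Ideal.map (icMapIF Fq L K) (Ideal.comap (icMapIF Fq L K) 𝔮) ≤ 𝔮 :=
    Ideal.map_comap_le
  have hmapne : Ideal.map (icMapIF Fq L K) (Ideal.comap (icMapIF Fq L K) 𝔮) ≠ ⊥ := by
    intro h0
    exact h𝔭ne ((Ideal.map_eq_bot_iff_of_injective hinj).mp h0)
  have he0 : Ideal.ramificationIdx' (Ideal.comap (icMapIF Fq L K) 𝔮) 𝔮 ≠ 0 :=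
    Ideal.IsDedekindDomain.ramificationIdx'_ne_zero hmapne h𝔮 hmaple
  by_contra hne
  have he2 : 2 ≤ Ideal.ramificationIdx' (Ideal.comap (icMapIF Fq L K) 𝔮) 𝔮 := by
    omega
  have hQe : 𝔮 ^ (Ideal.ramificationIdx' (Ideal.comap (icMapIF Fq L K) 𝔮) 𝔮)
      ∣ Ideal.map (algebraMap (↥(integralClosure (Polynomial Fq) ↥K))
        (↥(integralClosure (Polynomial Fq) L))) (Ideal.comap (icMapIF Fq L K) 𝔮) :=
    Ideal.dvd_iff_le.mpr Ideal.le_pow_ramificationIdx'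
  have hd1 := pow_sub_one_dvd_differentIdeal_aux
    (↥(integralClosure (Polynomial Fq) ↥K)) (↥K) L 𝔮 he0 h𝔭ne hQe
  have hdq : 𝔮 ∣ differentIdeal (↥(integralClosure (Polynomial Fq) ↥K))
      (↥(integralClosure (Polynomial Fq) L)) :=
    dvd_trans (dvd_pow_self 𝔮 (by omega)) hd1
  have hmemd := aeval_derivative_mem_differentIdeal
    (↥(integralClosure (Polynomial Fq) ↥K)) (↥K) L θ hadjθ
  exact hfθ ((Ideal.dvd_iff_le.mp hdq) hmemd)
end

section
/- Let p be a prime, q = p^l, and u a divisor of l (so that 𝔽_{p^u} ⊆ 𝔽_q). Let k = 𝔽_q(T), let P ∈ 𝔽_q[T] be monic irreducible, and let α ∈ k be an element of the localization of 𝔽_q[T] at the prime ideal (P) (i.e. α is P-integral). Let y be a root of X^{p^u} − X − α in an algebraic closure of k and set K = k(y). Then every prime of O_K lying over P has ramification index 1 over P. -/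
open Polynomial nonZeroDivisors

attribute [local instance] FractionRing.liftAlgebra FractionRing.isScalarTower_liftAlgebra

set_option maxHeartbeats 1000000
set_option synthInstance.maxHeartbeats 400000

/-- (Schmid's unramifiedness criterion.) Let `q = p^l`, `u ∣ l`,
`k = 𝔽_q(T)`, `P` monic irreducible, and `α ∈ k` a `P`-integral element (a quotient
`a/b` of polynomials with `P ∤ b`). If `K = k(y)` with `y^{p^u} − y = α`, then every
prime of `O_K` lying over `P` is unramified over `P`. -/
theorem artinSchreier_unramified_of_P_integral
    (p l u : ℕ) (hp : p.Prime) (hl : 0 < l) (hu : u ∣ l)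
    (Fq : Type*) [Field Fq] [Fintype Fq] (hq : Fintype.card Fq = p ^ l)
    (P : Polynomial Fq) (hPmonic : P.Monic) (hPirr : Irreducible P)
    (α : RatFunc Fq)
    (hα : ∃ a b : Polynomial Fq, ¬ P ∣ b ∧
      α = algebraMap (Polynomial Fq) (RatFunc Fq) a / algebraMap (Polynomial Fq) (RatFunc Fq) b)
    (K : Type*) [Field K] [Algebra (Polynomial Fq) K] [Algebra (RatFunc Fq) K]
    [IsScalarTower (Polynomial Fq) (RatFunc Fq) K]
    (y : K) (hy : y ^ p ^ u - y = algebraMap (RatFunc Fq) K α)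
    (hgen : IntermediateField.adjoin (RatFunc Fq) {y} = ⊤)
    (𝔭 : Ideal (integralClosure (Polynomial Fq) K)) (h𝔭 : 𝔭.IsPrime)
    (hlies : Ideal.comap (algebraMap (Polynomial Fq) (integralClosure (Polynomial Fq) K)) 𝔭
      = Ideal.span {P}) :
    Ideal.ramificationIdx' (S := integralClosure (Polynomial Fq) K)
      (Ideal.span {P}) 𝔭 = 1 := by
  classical
  obtain ⟨a, b, hPb, hab⟩ := hα
  have hb0 : b ≠ 0 := fun h => hPb (h ▸ dvd_zero P)
  have hu1 : 1 ≤ u := Nat.one_le_iff_ne_zero.mpr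
    (by rintro rfl; exact absurd (Nat.eq_zero_of_zero_dvd hu) hl.ne')
  have hpu2 : 2 ≤ p ^ u := le_trans hp.two_le (Nat.le_self_pow (by omega) p)
  -- characteristic
  have hcharFq : CharP Fq p := by
    obtain ⟨r, hr⟩ := CharP.exists Fq
    haveI := hr
    obtain ⟨n, hrp, hcard⟩ := FiniteField.card Fq r
    have hrdvd : r ∣ p ^ l := by
      rw [← hq, hcard]; exact dvd_pow_self r n.ne_zero
    have : r = p := (Nat.prime_dvd_prime_iff_eq hrp hp).mp (hrp.dvd_of_dvd_pow hrdvd)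
    rwa [this] at hr
  haveI := hcharFq
  haveI : CharP (RatFunc Fq) p :=
    charP_of_injective_algebraMap (algebraMap Fq (RatFunc Fq)).injective p
  haveI : CharP (Polynomial Fq) p :=
    charP_of_injective_algebraMap (algebraMap Fq (Polynomial Fq)).injective p
  -- y is integral over RatFunc Fq
  have hfy : aeval y (X ^ (p ^ u) - X - C α : (RatFunc Fq)[X]) = 0 := by
    simp only [map_sub, map_pow, aeval_X, aeval_C]
    rw [show (algebraMap (RatFunc Fq) K) α = y ^ p ^ u - y from hy.symm]; ring
  have hfmonic : (X ^ (p ^ u) - X - C α : (RatFunc Fq)[X]).Monic := by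
    have h1 : (X ^ (p ^ u) - X - C α : (RatFunc Fq)[X]) = X ^ ((p ^ u - 1) + 1) - (X + C α) := by
      rw [Nat.sub_add_cancel (by omega)]; ring
    rw [h1]
    refine monic_X_pow_sub ?_
    rw [degree_X_add_C]
    exact_mod_cast (by omega : (1:ℕ) < p ^ u - 1 + 1)
  have hyint : IsIntegral (RatFunc Fq) y := ⟨_, hfmonic, by rwa [← aeval_def]⟩
  -- separability
  have hfsep : (X ^ (p ^ u) - X - C α : (RatFunc Fq)[X]).Separable := by
    have hd : derivative (X ^ (p ^ u) - X - C α : (RatFunc Fq)[X]) = -1 := by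
      have hz : ((p ^ u : ℕ) : RatFunc Fq) = 0 := by
        rw [Nat.cast_pow, CharP.cast_eq_zero (RatFunc Fq) p, zero_pow (by omega)]
      simp [derivative_X_pow, hz]
    rw [Polynomial.separable_def, hd]
    exact (isCoprime_one_right).neg_right
  have hysep : IsSeparable (RatFunc Fq) y := hfsep.of_dvd (minpoly.dvd _ y hfy)
  -- finite dimensional and separable extension
  haveI : FiniteDimensional (RatFunc Fq) K := by
    haveI := IntermediateField.adjoin.finiteDimensional hyint
    exact ((IntermediateField.equivOfEq hgen).trans
      IntermediateField.topEquiv).toLinearEquiv.finiteDimensional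
  haveI : Algebra.IsSeparable (RatFunc Fq) K := by
    haveI : Algebra.IsSeparable (RatFunc Fq)
        (IntermediateField.adjoin (RatFunc Fq) ({y} : Set K)) :=
      (IntermediateField.isSeparable_adjoin_simple_iff_isSeparable _ _).mpr hysep
    exact AlgEquiv.Algebra.isSeparable ((IntermediateField.equivOfEq hgen).trans
      IntermediateField.topEquiv)
  -- instances on S := integralClosure
  haveI : Module.IsTorsionFree (Polynomial Fq) K := by
    refine Module.isTorsionFree_iff_algebraMap_injective.mpr ?_
    rw [IsScalarTower.algebraMap_eq (Polynomial Fq) (RatFunc Fq) K]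
    exact (algebraMap (RatFunc Fq) K).injective.comp
      (IsFractionRing.injective (Polynomial Fq) (RatFunc Fq))
  haveI : IsFractionRing (integralClosure (Polynomial Fq) K) K :=
    IsIntegralClosure.isFractionRing_of_finite_extension (Polynomial Fq) (RatFunc Fq) K _
  haveI : IsDedekindDomain (integralClosure (Polynomial Fq) K) :=
    integralClosure.isDedekindDomain (Polynomial Fq) (RatFunc Fq) K
  haveI : Module.IsTorsionFree (Polynomial Fq) (integralClosure (Polynomial Fq) K) :=
    IsIntegralClosure.isTorsionFree (Polynomial Fq) K
  haveI : Module.Finite (Polynomial Fq) (integralClosure (Polynomial Fq) K) :=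
    IsIntegralClosure.finite (Polynomial Fq) (RatFunc Fq) K _
  haveI : Algebra.IsIntegral (Polynomial Fq) (integralClosure (Polynomial Fq) K) :=
    IsIntegralClosure.isIntegral_algebra (Polynomial Fq) K
  -- separability of fraction rings
  have H : RingHom.comp (algebraMap (FractionRing (Polynomial Fq))
        (FractionRing (integralClosure (Polynomial Fq) K)))
      ↑(FractionRing.algEquiv (Polynomial Fq) (RatFunc Fq)).symm.toRingEquiv =
        RingHom.comp ↑(FractionRing.algEquiv (integralClosure (Polynomial Fq) K) K).symm.toRingEquiv
          (algebraMap (RatFunc Fq) K) := by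
    apply IsLocalization.ringHom_ext (Polynomial Fq)⁰
    refine RingHom.ext fun z => ?_
    simp only [AlgEquiv.toRingEquiv_eq_coe, RingHom.coe_comp, RingHom.coe_coe,
      AlgEquiv.coe_ringEquiv, Function.comp_apply, AlgEquiv.commutes,
      ← IsScalarTower.algebraMap_apply]
    rw [IsScalarTower.algebraMap_apply (Polynomial Fq) (integralClosure (Polynomial Fq) K) K,
      AlgEquiv.commutes, ← IsScalarTower.algebraMap_apply]
  haveI : Algebra.IsSeparable (FractionRing (Polynomial Fq))
      (FractionRing (integralClosure (Polynomial Fq) K)) :=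
    Algebra.IsSeparable.of_equiv_equiv _ _ H
  -- the integral generator x = b * y
  set c : Polynomial Fq := b ^ (p ^ u - 1) with hc
  have hcb : c * b = b ^ (p ^ u) := by
    rw [hc, ← pow_succ, Nat.sub_add_cancel (by omega)]
  have hbk : algebraMap (Polynomial Fq) (RatFunc Fq) b ≠ 0 := fun h =>
    hb0 (IsFractionRing.injective (Polynomial Fq) (RatFunc Fq) (by rw [h, map_zero]))
  have hkey : (algebraMap (Polynomial Fq) (RatFunc Fq) b) ^ (p ^ u) * α
      = algebraMap (Polynomial Fq) (RatFunc Fq) (c * a) := by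
    have hbpow : (algebraMap (Polynomial Fq) (RatFunc Fq) b) ^ (p ^ u)
        = (algebraMap (Polynomial Fq) (RatFunc Fq) b) ^ (p ^ u - 1)
          * algebraMap (Polynomial Fq) (RatFunc Fq) b := by
      rw [← pow_succ, Nat.sub_add_cancel (by omega)]
    rw [hab, hc, map_mul, map_pow, hbpow]
    field_simp
  set x0 : K := algebraMap (Polynomial Fq) K b * y with hx0def
  set F : (Polynomial Fq)[X] := X ^ (p ^ u) - C c * X - C (c * a) with hF
  have hFmonic : F.Monic := by
    have h1 : F = X ^ ((p ^ u - 1) + 1) - (C c * X + C (c * a)) := by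
      rw [Nat.sub_add_cancel (by omega), hF]; ring
    rw [h1]
    refine monic_X_pow_sub (lt_of_le_of_lt degree_linear_le ?_)
    exact_mod_cast (by omega : (1:ℕ) < p ^ u - 1 + 1)
  have hx0F : aeval x0 F = 0 := by
    have hyK : y ^ p ^ u = y + algebraMap (RatFunc Fq) K α := by
      rw [← hy]; ring
    have h1 : (algebraMap (Polynomial Fq) K) b ^ p ^ u * algebraMap (RatFunc Fq) K α
        = algebraMap (Polynomial Fq) K (c * a) := by
      rw [IsScalarTower.algebraMap_apply (Polynomial Fq) (RatFunc Fq) K (c * a), ← hkey,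
        IsScalarTower.algebraMap_apply (Polynomial Fq) (RatFunc Fq) K b, map_mul, map_pow]
    have h2 : algebraMap (Polynomial Fq) K c * algebraMap (Polynomial Fq) K b
        = (algebraMap (Polynomial Fq) K b) ^ (p ^ u) := by
      rw [← map_mul, hcb, map_pow]
    rw [map_mul] at h1
    simp only [hF, map_sub, map_mul, map_pow, aeval_X, aeval_C, hx0def]
    rw [mul_pow, hyK]
    linear_combination h1 - y * h2
  have hx0int : IsIntegral (Polynomial Fq) x0 := ⟨F, hFmonic, by rwa [← aeval_def]⟩
  set x : integralClosure (Polynomial Fq) K := ⟨x0, hx0int⟩ with hxdef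
  have hxint : IsIntegral (Polynomial Fq) x := Algebra.IsIntegral.isIntegral x
  -- adjoin x = ⊤
  have hadj0 : Algebra.adjoin (RatFunc Fq) ({y} : Set K) = ⊤ := by
    have h := congrArg IntermediateField.toSubalgebra hgen
    rwa [IntermediateField.adjoin_simple_toSubalgebra_of_isAlgebraic hyint.isAlgebraic,
      IntermediateField.top_toSubalgebra] at h
  have hadj : Algebra.adjoin (RatFunc Fq)
      {algebraMap (integralClosure (Polynomial Fq) K) K x} = ⊤ := by
    rw [eq_top_iff, ← hadj0, Algebra.adjoin_le_iff, Set.singleton_subset_iff]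
    have hx0mem : x0 ∈ Algebra.adjoin (RatFunc Fq)
        ({algebraMap (integralClosure (Polynomial Fq) K) K x} : Set K) :=
      Algebra.subset_adjoin rfl
    have hbK : algebraMap (RatFunc Fq) K (algebraMap (Polynomial Fq) (RatFunc Fq) b) ≠ 0 :=
      fun h => hbk ((algebraMap (RatFunc Fq) K).injective (by rw [h, map_zero]))
    have hyx : y = (algebraMap (Polynomial Fq) (RatFunc Fq) b)⁻¹ • x0 := by
      rw [hx0def, Algebra.smul_def, map_inv₀,
        IsScalarTower.algebraMap_apply (Polynomial Fq) (RatFunc Fq) K, ← mul_assoc,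
        inv_mul_cancel₀ hbK, one_mul]
    show y ∈ _
    rw [hyx]
    exact Subalgebra.smul_mem _ hx0mem _
  -- minpoly divides F
  have hxF : aeval x F = 0 := by
    apply IsFractionRing.injective (integralClosure (Polynomial Fq) K) K
    rw [map_zero, ← Polynomial.aeval_algebraMap_apply]
    exact hx0F
  have hdvd : minpoly (Polynomial Fq) x ∣ F := minpoly.isIntegrallyClosed_dvd hxint hxF
  obtain ⟨g, hFg⟩ := hdvd
  -- derivative of F
  have hFd : derivative F = - C c := by
    have hz : ((p ^ u : ℕ) : Polynomial Fq) = 0 := by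
      rw [Nat.cast_pow, CharP.cast_eq_zero (Polynomial Fq) p, zero_pow (by omega)]
    simp [hF, derivative_X_pow, hz]
  have hkey2 : aeval x (derivative (minpoly (Polynomial Fq) x)) * aeval x g
      = - algebraMap (Polynomial Fq) (integralClosure (Polynomial Fq) K) c := by
    have h1 : aeval x (derivative F)
        = aeval x (derivative (minpoly (Polynomial Fq) x)) * aeval x g := by
      rw [hFg, derivative_mul, map_add, map_mul, map_mul, minpoly.aeval, zero_mul, add_zero]
    rw [← h1, hFd, map_neg, aeval_C]
  -- ramification index
  haveI : (Ideal.span ({P} : Set (Polynomial Fq))).IsMaximal :=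
    PrincipalIdealRing.isMaximal_of_irreducible hPirr
  have hspanP_ne : (Ideal.span ({P} : Set (Polynomial Fq))) ≠ ⊥ := by
    rw [Ne, Ideal.span_singleton_eq_bot]
    exact hPirr.ne_zero
  have hle : Ideal.map (algebraMap (Polynomial Fq) (integralClosure (Polynomial Fq) K))
      (Ideal.span {P}) ≤ 𝔭 := Ideal.map_le_iff_le_comap.mpr (le_of_eq hlies.symm)
  have hmapne : Ideal.map (algebraMap (Polynomial Fq) (integralClosure (Polynomial Fq) K))
      (Ideal.span {P}) ≠ ⊥ := by
    rw [Ne, Ideal.map_eq_bot_iff_of_injective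
      (FaithfulSMul.algebraMap_injective (Polynomial Fq) (integralClosure (Polynomial Fq) K))]
    exact hspanP_ne
  have hne : Ideal.ramificationIdx' (S := integralClosure (Polynomial Fq) K)
      (Ideal.span {P}) 𝔭 ≠ 0 :=
    Ideal.IsDedekindDomain.ramificationIdx'_ne_zero hmapne h𝔭 hle
  have hnot2 : ¬ 2 ≤ Ideal.ramificationIdx'
      (S := integralClosure (Polynomial Fq) K) (Ideal.span {P}) 𝔭 := by
    intro h2
    set e := Ideal.ramificationIdx'
      (S := integralClosure (Polynomial Fq) K) (Ideal.span {P}) 𝔭 with he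
    have hdvd𝔭 : 𝔭 ^ e ∣ Ideal.map (algebraMap (Polynomial Fq)
        (integralClosure (Polynomial Fq) K)) (Ideal.span {P}) :=
      Ideal.dvd_iff_le.mpr Ideal.le_pow_ramificationIdx'
    have hdiff : 𝔭 ^ (e - 1) ∣ differentIdeal (Polynomial Fq) (integralClosure (Polynomial Fq) K) :=
      pow_sub_one_dvd_differentIdeal (Polynomial Fq) 𝔭 e hspanP_ne hdvd𝔭
    have h𝔭diff : 𝔭 ∣ differentIdeal (Polynomial Fq) (integralClosure (Polynomial Fq) K) :=
      dvd_trans (dvd_pow_self 𝔭 (by omega)) hdiff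
    have hcd := conductor_mul_differentIdeal (Polynomial Fq) (RatFunc Fq) K x hadj
    have hdiffdvd : differentIdeal (Polynomial Fq) (integralClosure (Polynomial Fq) K) ∣
        Ideal.span {aeval x (derivative (minpoly (Polynomial Fq) x))} :=
      ⟨_, by rw [← hcd]; ring⟩
    have h𝔭span : 𝔭 ∣ Ideal.span {aeval x (derivative (minpoly (Polynomial Fq) x))} :=
      h𝔭diff.trans hdiffdvd
    have hmem : aeval x (derivative (minpoly (Polynomial Fq) x)) ∈ 𝔭 :=
      Ideal.dvd_iff_le.mp h𝔭span (Ideal.mem_span_singleton_self _)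
    have hcmem : algebraMap (Polynomial Fq) (integralClosure (Polynomial Fq) K) c ∈ 𝔭 := by
      have hmem2 : aeval x (derivative (minpoly (Polynomial Fq) x)) * aeval x g ∈ 𝔭 :=
        Ideal.mul_mem_right _ _ hmem
      rw [hkey2] at hmem2
      exact (neg_mem_iff).mp hmem2
    have hPc : c ∈ Ideal.span ({P} : Set (Polynomial Fq)) := by
      rw [← hlies]
      exact hcmem
    rw [Ideal.mem_span_singleton] at hPc
    exact hPb (hPirr.prime.dvd_of_dvd_pow (hc ▸ hPc))
  omega
end

section
/- Let p be a prime and F a field of characteristic p. Let X ∈ F with X ≠ 0, and let λ ∈ F satisfy (λ^p + Xλ)^{p−1} + X = 0. Then λ^{p−1} + X ≠ 0, and the element δ := (λ^{p−1} + X)^{−1} satisfies δ^p − δ = −X^{−1}. -/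
/-- Let `F` be a field of characteristic `p`, `X ∈ F` nonzero, and
`λ ∈ F` with `(λ^p + Xλ)^{p−1} + X = 0`. Then `λ^{p−1} + X ≠ 0` and
`δ := (λ^{p−1} + X)⁻¹` satisfies `δ^p − δ = −X⁻¹`. -/
theorem artinSchreier_generator_of_carlitz_relation
    (p : ℕ) (hp : p.Prime) (F : Type*) [Field F] [CharP F p]
    (X : F) (hX : X ≠ 0) (lam : F)
    (hlam : (lam ^ p + X * lam) ^ (p - 1) + X = 0) :
    lam ^ (p - 1) + X ≠ 0 ∧
      ((lam ^ (p - 1) + X)⁻¹) ^ p - (lam ^ (p - 1) + X)⁻¹ = -X⁻¹ := by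
  obtain ⟨q, hq⟩ : ∃ q, p = q + 1 := ⟨p - 1, (Nat.succ_pred_eq_of_pos hp.pos).symm⟩
  have hq1 : 1 ≤ q := by
    have := hp.two_le; omega
  rw [hq] at hlam ⊢
  simp only [Nat.add_sub_cancel] at hlam ⊢
  have hs : lam ^ q + X ≠ 0 := by
    intro h
    have hmu : lam ^ (q + 1) + X * lam = lam * (lam ^ q + X) := by ring
    rw [hmu, h, mul_zero, zero_pow (by omega), zero_add] at hlam
    exact hX hlam
  refine ⟨hs, ?_⟩
  have hmu : lam ^ (q + 1) + X * lam = lam * (lam ^ q + X) := by ring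
  rw [hmu, mul_pow] at hlam
  rw [inv_pow]
  field_simp
  linear_combination (lam ^ q + X) * hlam
end
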